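/- Let m ≡ 2 or 3 (mod 4) be squarefree and α = ⌈√m⌉ + √m. Then 2α is a square in ℚ(√m) if and only if m ∈ {3, 5}; in particular (2k+1)α is never a square in ℚ(√m) for any integer k ≥ 0. -/

import Mathlib

open Polynomial

lemma aux_irr (m : ℕ) (hm : 1 < m) (hsf : Squarefree m) : Irrational (Real.sqrt m) := by
  rw [irrational_sqrt_natCast_iff]
  rintro ⟨r, hr⟩
  have := hsf r (hr ▸ dvd_refl m)
  rw [Nat.isUnit_iff] at this
  subst this
  simp at hr
  omega

lemma aux_split {m : ℕ} (hirr : Irrational (Real.sqrt m)) {p q r s : ℚ}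
    (h : (p:ℝ) + q * Real.sqrt m = r + s * Real.sqrt m) : p = r ∧ q = s := by
  by_cases hqs : q = s
  · subst hqs
    refine ⟨?_, rfl⟩
    have : (p:ℝ) = r := by linarith
    exact_mod_cast this
  · exfalso
    have h1 : Real.sqrt m = ((p - r) / (s - q) : ℚ) := by
      have hqs' : ((s:ℝ) - q) ≠ 0 := by
        intro h0
        apply hqs
        have : (q:ℝ) = s := by linarith
        exact_mod_cast this
      push_cast
      field_simp
      linarith
    exact hirr ⟨_, h1.symm⟩

lemma aux_den {m : ℕ} (hsf : Squarefree m) (t : ℚ) (N : ℤ) (h : (m:ℚ) * t^2 = N) :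
    ∃ T : ℤ, (T:ℚ) = t := by
  refine ⟨t.num, ?_⟩
  suffices hden : t.den = 1 by
    conv_rhs => rw [← Rat.num_div_den t, hden]
    simp
  have hint : (m:ℤ) * t.num^2 = N * (t.den:ℤ)^2 := by
    have := h
    rw [← Rat.num_div_den t] at this
    have hd : ((t.den:ℚ)) ≠ 0 := by exact_mod_cast t.den_nz
    field_simp at this
    rw [mul_comm N]
    exact_mod_cast this
  have hdvd : (t.den:ℤ)^2 ∣ (m:ℤ) * t.num^2 := ⟨N, by linarith [hint]⟩
  have hcop : IsCoprime (t.den:ℤ) t.num := by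
    rw [Int.isCoprime_iff_gcd_eq_one, Int.gcd, Int.natAbs_natCast]
    exact t.reduced.symm
  have hdvd2 : (t.den:ℤ)^2 ∣ (m:ℤ) := (hcop.pow).dvd_of_dvd_mul_right hdvd
  have hdvd3 : t.den * t.den ∣ m := by
    have : (t.den:ℤ) * t.den ∣ (m:ℤ) := by rw [← sq]; exact hdvd2
    exact_mod_cast this
  have := hsf t.den hdvd3
  rwa [Nat.isUnit_iff] at this

lemma aux_key (m : ℕ) (hm : 1 < m) (hsf : Squarefree m) (a b : ℚ)
    (hx : IsIntegral ℤ ((a:ℝ) + b * Real.sqrt m)) :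
    ∃ A B : ℤ, (A:ℚ) = 2*a ∧ (B:ℚ) = 2*b ∧ (4:ℤ) ∣ A^2 - (m:ℤ)*B^2 := by
  have hs : Real.sqrt m ^ 2 = (m:ℝ) := Real.sq_sqrt (by positivity)
  by_cases hb : b = 0
  · subst hb
    have hx' : IsIntegral ℤ (algebraMap ℚ ℝ a) := by
      convert hx using 1
      rw [eq_ratCast]
      push_cast
      ring
    rw [isIntegral_algebraMap_iff (algebraMap ℚ ℝ).injective] at hx'
    obtain ⟨A0, hA0⟩ := IsIntegrallyClosed.isIntegral_iff.mp hx'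
    refine ⟨2*A0, 0, ?_, by norm_num, ?_⟩
    · push_cast
      rw [show ((A0:ℚ)) = a from hA0]
    · exact ⟨A0^2, by ring⟩
  · -- b ≠ 0 case
    have hirr := aux_irr m hm hsf
    set x : ℝ := (a:ℝ) + b * Real.sqrt m with hxdef
    set q : ℚ[X] := X^2 - C (2*a) * X + C (a^2 - m*b^2) with hqdef
    have hq0 : aeval x q = 0 := by
      simp only [hqdef, map_add, map_sub, map_pow, map_mul, aeval_X, aeval_C, eq_ratCast]
      push_cast
      linear_combination ((b:ℝ))^2 * hs
    have hqmonic : q.Monic := by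
      unfold q
      monicity!
    have hxint : IsIntegral ℚ x := hx.tower_top
    have hdvd : minpoly ℚ x ∣ q := minpoly.dvd ℚ x hq0
    have hqdeg : q.natDegree = 2 := by
      unfold q
      compute_degree!
    have hd2 : (minpoly ℚ x).natDegree = 2 := by
      have hle : (minpoly ℚ x).natDegree ≤ 2 := by
        rw [← hqdeg]
        exact Polynomial.natDegree_le_of_dvd hdvd hqmonic.ne_zero
      have hge : 2 ≤ (minpoly ℚ x).natDegree := by
        rw [minpoly.two_le_natDegree_iff hxint]
        rintro ⟨r, hr⟩
        apply hirr
        refine ⟨(r - a)/b, ?_⟩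
        have : (r:ℝ) = a + b * Real.sqrt m := hr
        push_cast
        field_simp
        linarith
      omega
    have heq : q = minpoly ℚ x := by
      obtain ⟨u, hu⟩ := hdvd
      have hu0 : u ≠ 0 := by
        rintro rfl
        rw [mul_zero] at hu
        exact hqmonic.ne_zero hu
      have hudeg : u.natDegree = 0 := by
        have := Polynomial.natDegree_mul (minpoly.ne_zero hxint) hu0
        rw [← hu, hqdeg, hd2] at this
        omega
      have hulead : u = C (u.coeff 0) := Polynomial.eq_C_of_natDegree_eq_zero hudeg
      have : u.coeff 0 = 1 := by
        have h1 : q.leadingCoeff = (minpoly ℚ x).leadingCoeff * u.leadingCoeff := by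
          rw [hu, Polynomial.leadingCoeff_mul]
        rw [hqmonic.leadingCoeff, (minpoly.monic hxint).leadingCoeff, one_mul] at h1
        rw [Polynomial.leadingCoeff, hudeg] at h1
        exact h1.symm
      rw [hu, hulead, this, map_one, mul_one]
    have hmap : minpoly ℚ x = (minpoly ℤ x).map (algebraMap ℤ ℚ) :=
      minpoly.isIntegrallyClosed_eq_field_fractions' ℚ hx
    -- coefficients
    have hc1 : ((minpoly ℤ x).coeff 1 : ℚ) = -(2*a) := by
      have : q.coeff 1 = -(2*a) := by
        rw [hqdef]
        simp only [Polynomial.coeff_add, Polynomial.coeff_sub, Polynomial.coeff_C_mul,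
          Polynomial.coeff_X_pow, Polynomial.coeff_C, Polynomial.coeff_X_one]
        norm_num
      rw [heq, hmap] at this
      simpa using this
    have hc0 : ((minpoly ℤ x).coeff 0 : ℚ) = a^2 - m*b^2 := by
      have : q.coeff 0 = a^2 - m*b^2 := by
        rw [hqdef]
        simp only [Polynomial.coeff_add, Polynomial.coeff_sub, Polynomial.coeff_C_mul,
          Polynomial.coeff_X_pow, Polynomial.coeff_C, Polynomial.coeff_X_zero]
        norm_num
      rw [heq, hmap] at this
      simpa using this
    set A : ℤ := -((minpoly ℤ x).coeff 1) with hAdef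
    set N0 : ℤ := (minpoly ℤ x).coeff 0 with hNdef
    have hA : (A:ℚ) = 2*a := by rw [hAdef]; push_cast; rw [hc1]; ring
    -- m * (2b)^2 is an integer
    have hmb : (m:ℚ) * (2*b)^2 = ((A^2 - 4*N0 : ℤ) : ℚ) := by
      push_cast
      rw [hA, hc0]
      ring
    obtain ⟨B, hB⟩ := aux_den hsf (2*b) (A^2 - 4*N0) hmb
    refine ⟨A, B, hA, hB, ?_⟩
    have : ((A^2 - (m:ℤ)*B^2 : ℤ) : ℚ) = ((4*N0 : ℤ) : ℚ) := by
      push_cast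
      rw [hA, hB, hc0]
      ring
    have h4 : A^2 - (m:ℤ)*B^2 = 4*N0 := by exact_mod_cast this
    exact ⟨N0, by linarith [h4]⟩

lemma aux_zmod : ∀ A B M : ZMod 4, (M = 2 ∨ M = 3) → A*B = 2 → A^2 = M*B^2 → False := by
  decide

lemma aux_four (A B mz : ℤ) (hmz : mz % 4 = 2 ∨ mz % 4 = 3) (hAB : A*B = 4)
    (hd : (4:ℤ) ∣ A^2 - mz*B^2) : (A = 2 ∧ B = 2) ∨ (A = -2 ∧ B = -2) := by
  have hA4 : A ∣ 4 := ⟨B, hAB.symm⟩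
  have hB4 : B ∣ 4 := ⟨A, by linarith [hAB]⟩
  have h1 : A ≤ 4 := Int.le_of_dvd (by norm_num) hA4
  have h2 : -4 ≤ A := by
    have := Int.le_of_dvd (show (0:ℤ) < 4 by norm_num) ((neg_dvd).mpr hA4)
    omega
  have h3 : B ≤ 4 := Int.le_of_dvd (by norm_num) hB4
  have h4 : -4 ≤ B := by
    have := Int.le_of_dvd (show (0:ℤ) < 4 by norm_num) ((neg_dvd).mpr hB4)
    omega
  interval_cases A <;> interval_cases B <;> omega



/-- Let `m ≡ 2` or `3 (mod 4)` be squarefree, `c = ⌈√m⌉` the smallest integer greater than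
`√m`, and `α = c + √m`. Then `2α` is a square (of an algebraic integer) in `ℚ(√m)` if and
only if `m ∈ {3, 5}`; and `(2k+1)α` is never a square in `ℚ(√m)` for any `k ≥ 0`. -/
theorem stmt_13 (m : ℕ) (hm : 1 < m) (hsf : Squarefree m)
    (hm4 : m % 4 = 2 ∨ m % 4 = 3)
    (c : ℕ) (hc1 : Real.sqrt m < c) (hc2 : ∀ k : ℕ, Real.sqrt m < k → c ≤ k) :
    ((∃ a b : ℚ, IsIntegral ℤ ((a : ℝ) + b * Real.sqrt m) ∧
        ((a : ℝ) + b * Real.sqrt m) ^ 2 = 2 * ((c : ℝ) + Real.sqrt m)) ↔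
      (m = 3 ∨ m = 5)) ∧
    ∀ k : ℕ, ¬ ∃ a b : ℚ, IsIntegral ℤ ((a : ℝ) + b * Real.sqrt m) ∧
      ((a : ℝ) + b * Real.sqrt m) ^ 2 = (2 * (k : ℝ) + 1) * ((c : ℝ) + Real.sqrt m) := by
  have hirr := aux_irr m hm hsf
  have hs : Real.sqrt m ^ 2 = (m:ℝ) := Real.sq_sqrt (by positivity)
  constructor
  · constructor
    · rintro ⟨a, b, hx, hsq⟩
      have hexp : ((a^2 + m*b^2 : ℚ) : ℝ) + ((2*a*b : ℚ):ℝ) * Real.sqrt m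
          = ((2*c : ℚ):ℝ) + ((2:ℚ):ℝ) * Real.sqrt m := by
        push_cast
        linear_combination hsq - (b:ℝ)^2 * hs
      obtain ⟨hE1, hE2⟩ := aux_split hirr hexp
      obtain ⟨A, B, hA, hB, hd⟩ := aux_key m hm hsf a b hx
      have hABZ : A * B = 4 := by
        have : (A:ℚ) * B = 4 := by rw [hA, hB]; linarith [hE2]
        exact_mod_cast this
      have hmz : (m:ℤ) % 4 = 2 ∨ (m:ℤ) % 4 = 3 := by omega
      have hab1 : a^2 = 1 ∧ b^2 = 1 := by
        rcases aux_four A B m hmz hABZ hd with ⟨hA2, hB2⟩ | ⟨hA2, hB2⟩ <;>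
            rw [hA2] at hA <;> rw [hB2] at hB <;> push_cast at hA hB
        · have ha : a = 1 := by linarith
          have hb : b = 1 := by linarith
          exact ⟨by rw [ha]; ring, by rw [hb]; ring⟩
        · have ha : a = -1 := by linarith
          have hb : b = -1 := by linarith
          exact ⟨by rw [ha]; ring, by rw [hb]; ring⟩
      rw [hab1.1, hab1.2, mul_one] at hE1
      have hmc : m + 1 = 2 * c := by
        have h9 : (m:ℚ) + 1 = 2 * c := by linarith [hE1]
        exact_mod_cast h9
      -- bounds on c
      have hub : m < c^2 := by
        have : (m:ℝ) < (c:ℝ)^2 := by nlinarith [hc1, Real.sqrt_nonneg (m:ℝ), hs]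
        exact_mod_cast this
      have hcpos : 1 < c := by omega
      have hlb : (c-1)^2 ≤ m := by
        by_contra hcon
        push_neg at hcon
        have h1 : Real.sqrt m < ((c-1 : ℕ):ℝ) := by
          rw [Real.sqrt_lt' (by exact_mod_cast Nat.sub_pos_of_lt hcpos)]
          exact_mod_cast hcon
        have := hc2 (c-1) h1
        omega
      obtain ⟨d, rfl⟩ : ∃ d, c = d + 1 := ⟨c - 1, by omega⟩
      simp only [Nat.add_sub_cancel] at hlb
      have hd2 : d ≤ 2 := by nlinarith [hlb, hmc]
      interval_cases d <;> omega
    · rintro (rfl | rfl)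
      · -- m = 3
        have hcast : ((3:ℕ):ℝ) = 3 := by norm_num
        have hlt : Real.sqrt ((3:ℕ):ℝ) < ((2:ℕ):ℝ) := by
          rw [hcast]
          rw [show ((2:ℕ):ℝ) = 2 by norm_num, Real.sqrt_lt' (by norm_num)]
          norm_num
        have hge : 1 < c := by
          by_contra hcon
          push_neg at hcon
          have h1 : (c:ℝ) ≤ 1 := by exact_mod_cast hcon
          have : ((3:ℕ):ℝ) < 1^2 := by
            rw [← Real.sqrt_lt' (by norm_num)]
            linarith [hc1]
          norm_num at this
        have hceq : c = 2 := le_antisymm (hc2 2 hlt) (by omega)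
        subst hceq
        have h3int : IsIntegral ℤ (Real.sqrt ((3:ℕ):ℝ)) := by
          refine ⟨Polynomial.X^2 - Polynomial.C 3, Polynomial.monic_X_pow_sub_C 3 (by norm_num), ?_⟩
          simp only [Polynomial.eval₂_sub, Polynomial.eval₂_pow, Polynomial.eval₂_X,
            Polynomial.eval₂_C]
          rw [hs]
          norm_num
        refine ⟨1, 1, ?_, ?_⟩
        · have heq : ((1:ℚ):ℝ) + ((1:ℚ):ℝ) * Real.sqrt ((3:ℕ):ℝ) = 1 + Real.sqrt ((3:ℕ):ℝ) := by
            norm_num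
          rw [heq]
          exact isIntegral_one.add h3int
        · push_cast
          linear_combination hs
      · -- m = 5 contradicts hm4
        exfalso
        omega
  · rintro k ⟨a, b, hx, hsq⟩
    have hexp : ((a^2 + m*b^2 : ℚ) : ℝ) + ((2*a*b : ℚ):ℝ) * Real.sqrt m
        = (((2*k+1)*c : ℚ):ℝ) + ((2*k+1:ℚ):ℝ) * Real.sqrt m := by
      push_cast
      linear_combination hsq - (b:ℝ)^2 * hs
    obtain ⟨hE1, hE2⟩ := aux_split hirr hexp
    obtain ⟨A, B, hA, hB, hd⟩ := aux_key m hm hsf a b hx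
    have hABZ : A * B = 4*k + 2 := by
      have : (A:ℚ) * B = 4*k + 2 := by rw [hA, hB]; linarith [hE2]
      exact_mod_cast this
    have hz1 : ((A:ZMod 4)) * (B:ZMod 4) = 2 := by
      have := congrArg (Int.cast : ℤ → ZMod 4) hABZ
      push_cast at this
      rw [this, show ((4:ZMod 4)) = 0 by decide]
      ring
    have hz2 : ((A:ZMod 4))^2 = (m:ZMod 4) * (B:ZMod 4)^2 := by
      have h0 : (((A^2 - (m:ℤ)*B^2 : ℤ)) : ZMod 4) = 0 :=
        (ZMod.intCast_zmod_eq_zero_iff_dvd _ 4).mpr hd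
      push_cast at h0
      linear_combination h0
    have hm2 : ((m:ℕ) : ZMod 4) = 2 ∨ ((m:ℕ) : ZMod 4) = 3 := by
      rcases hm4 with h | h
      · left; rw [← ZMod.natCast_mod, h]; decide
      · right; rw [← ZMod.natCast_mod, h]; decide
    exact aux_zmod A B m hm2 hz1 hz2
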